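/- arXiv:2011.09729 — 6 statements merged into one kernel-verified Lean document; each statement's English description precedes it below -/
import Mathlib

section
/- Let G be a connected simple graph on vertex set [n+1] with n ≥ 1, and for each vertex i let k_i(G) denote the number of connected induced subgraphs of G containing i. If k_{n+1}(G) ≤ k_i(G) for all i ∈ [n+1], then the induced subgraph G|_{[n]} on [n] = [n+1] \ {n+1} is connected. -/
open scoped Classical

lemma reachMono {V : Type*} (G : SimpleGraph V) {S T : Set V} (hST : S ⊆ T) {a b : S}
    (h : (G.induce S).Reachable a b) :
    (G.induce T).Reachable ⟨a, hST a.2⟩ ⟨b, hST b.2⟩ :=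
  h.map (⟨Set.inclusion hST, fun {_ _} h => h⟩ : G.induce S →g G.induce T)

lemma singletonConnected {V : Type*} (G : SimpleGraph V) (a : V) :
    (G.induce ({a} : Set V)).Connected := by
  rw [SimpleGraph.connected_iff]
  refine ⟨fun u w => ?_, ⟨⟨a, rfl⟩⟩⟩
  have : u = w := Subtype.ext (by rw [u.2, w.2])
  exact this ▸ SimpleGraph.Reachable.refl _

lemma insertConnected {V : Type*} (G : SimpleGraph V) {I : Set V} {u x : V}
    (hI : (G.induce I).Connected) (hu : u ∈ I) (hxu : G.Adj x u) :
    (G.induce (insert x I)).Connected := by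
  have hsub : I ⊆ insert x I := Set.subset_insert x I
  have key : ∀ w : (insert x I : Set V), (G.induce (insert x I)).Reachable w ⟨u, Or.inr hu⟩ := by
    rintro ⟨w, hw⟩
    rcases hw with hw | hw
    · subst hw
      exact (SimpleGraph.Adj.reachable
        (by exact hxu : (G.induce (insert w I)).Adj ⟨w, Or.inl rfl⟩ ⟨u, Or.inr hu⟩))
    · exact reachMono G hsub (hI.preconnected ⟨w, hw⟩ ⟨u, hu⟩)
  rw [SimpleGraph.connected_iff]
  exact ⟨fun a b => (key a).trans (key b).symm, ⟨⟨u, Or.inr hu⟩⟩⟩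

lemma existsNbr {V : Type*} (G : SimpleGraph V) (v : V) :
    ∀ {a b : V} (_ : G.Walk a b) (_ : b = v) (ha : a ∈ ({v}ᶜ : Set V)),
      ∃ u, ∃ hu : u ∈ ({v}ᶜ : Set V), G.Adj u v ∧
        (G.induce ({v}ᶜ : Set V)).Reachable ⟨a, ha⟩ ⟨u, hu⟩ := by
  intro a b p
  induction p with
  | nil => intro hb ha; exact absurd hb ha
  | @cons a c b h q ih =>
    intro hb ha
    by_cases hc : c = v
    · subst hc
      exact ⟨a, ha, h, SimpleGraph.Reachable.refl _⟩
    · obtain ⟨u, hu, huv, hr⟩ := ih hb hc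
      refine ⟨u, hu, huv, ?_⟩
      exact (SimpleGraph.Adj.reachable
        (by exact h : (G.induce ({v}ᶜ : Set V)).Adj ⟨a, ha⟩ ⟨c, hc⟩)).trans hr


/-- The graphical building set of connected induced subgraphs. -/
noncomputable def graphBuildingSet {m : ℕ} (G : SimpleGraph (Fin m)) :
    Finset (Finset (Fin m)) :=
  Finset.univ.filter fun I => (G.induce (I : Set (Fin m))).Connected

/-- `k_i(G)`: the number of connected induced subgraphs of `G` containing `i`. -/
noncomputable def kOf {m : ℕ} (G : SimpleGraph (Fin m)) (i : Fin m) : ℕ :=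
  ((graphBuildingSet G).filter fun I => i ∈ I).card

/-- If `G` is a connected simple graph on `[n+1]`, `n ≥ 1`, and the
vertex `n+1` minimizes `k_i(G)`, then the induced subgraph on `[n]` is
connected. -/
theorem induced_on_complement_of_minimizer_connected {n : ℕ} (hn : 1 ≤ n)
    (G : SimpleGraph (Fin (n + 1))) (hG : G.Connected)
    (hmin : ∀ i : Fin (n + 1), kOf G (Fin.last n) ≤ kOf G i) :
    (G.induce ({Fin.last n}ᶜ : Set (Fin (n + 1)))).Connected := by
  by_contra hcon
  set v : Fin (n + 1) := Fin.last n with hv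
  set S : Set (Fin (n + 1)) := {v}ᶜ with hS
  set H : SimpleGraph ↥S := G.induce S with hH
  -- S is nonempty
  have h0 : (0 : Fin (n + 1)) ∈ S := by
    simp only [hS, Set.mem_compl_singleton_iff, hv]
    intro h
    have := congrArg Fin.val h
    simp [Fin.last] at this
    omega
  haveI : Nonempty ↥S := ⟨⟨0, h0⟩⟩
  -- get two non-reachable vertices
  have hpre : ¬ H.Preconnected := by
    intro hp
    exact hcon ((SimpleGraph.connected_iff _).mpr ⟨hp, ‹Nonempty ↥S›⟩)
  obtain ⟨x, y, hxy⟩ : ∃ x y : ↥S, ¬ H.Reachable x y := by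
    by_contra hall
    push_neg at hall
    exact hpre fun a b => hall a b
  -- get neighbors of v in the components of x and y
  obtain ⟨px⟩ := hG.preconnected ↑x v
  obtain ⟨u1, hu1S, hu1adj, hru1⟩ := existsNbr G v px rfl x.2
  obtain ⟨py⟩ := hG.preconnected ↑y v
  obtain ⟨u2, hu2S, hu2adj, hru2⟩ := existsNbr G v py rfl y.2
  -- components
  set C1 : Set (Fin (n + 1)) := {w | ∃ h : w ∈ S, H.Reachable ⟨w, h⟩ x} with hC1
  set C2 : Set (Fin (n + 1)) := {w | ∃ h : w ∈ S, ¬ H.Reachable ⟨w, h⟩ x} with hC2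
  have hu1C1 : u1 ∈ C1 := ⟨hu1S, hru1.symm⟩
  have hu2C2 : u2 ∈ C2 := by
    refine ⟨hu2S, fun hr => hxy ?_⟩
    exact (hru2.trans hr).symm
  have hu2notC1 : u2 ∉ C1 := by
    rintro ⟨h, hr⟩
    exact hu2C2.2 hr
  have hu1notC2 : u1 ∉ C2 := by
    rintro ⟨h, hnr⟩
    exact hnr hru1.symm
  have hu1v : u1 ≠ v := hu1S
  have hu2v : u2 ≠ v := hu2S
  -- counting
  set 𝒢 := graphBuildingSet G with h𝒢
  have mem𝒢 : ∀ I : Finset (Fin (n+1)), I ∈ 𝒢 ↔ (G.induce (I : Set (Fin (n+1)))).Connected := by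
    intro I
    simp [h𝒢, graphBuildingSet]
  -- key subset facts: connected I with u ∈ I, v ∉ I lies in u's component
  have subC1 : ∀ I ∈ 𝒢, u1 ∈ I → v ∉ I → (I : Set (Fin (n+1))) ⊆ C1 := by
    intro I hI huI hvI a ha
    have hIS : (I : Set (Fin (n+1))) ⊆ S := by
      intro w hw
      simp only [hS, Set.mem_compl_singleton_iff]
      rintro rfl
      exact hvI hw
    have haS : a ∈ S := hIS ha
    have hr : H.Reachable ⟨a, haS⟩ ⟨u1, hu1S⟩ :=
      reachMono G hIS (((mem𝒢 I).mp hI).preconnected ⟨a, ha⟩ ⟨u1, huI⟩)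
    exact ⟨haS, hr.trans hru1.symm⟩
  have subC2 : ∀ I ∈ 𝒢, u2 ∈ I → v ∉ I → (I : Set (Fin (n+1))) ⊆ C2 := by
    intro I hI huI hvI a ha
    have hIS : (I : Set (Fin (n+1))) ⊆ S := by
      intro w hw
      simp only [hS, Set.mem_compl_singleton_iff]
      rintro rfl
      exact hvI hw
    have haS : a ∈ S := hIS ha
    have hr : H.Reachable ⟨a, haS⟩ ⟨u2, hu2S⟩ :=
      reachMono G hIS (((mem𝒢 I).mp hI).preconnected ⟨a, ha⟩ ⟨u2, huI⟩)
    refine ⟨haS, fun hrx => ?_⟩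
    exact hu2C2.2 (hr.symm.trans hrx)
  -- the injection inequality, generic in the component C
  have keyIneq : ∀ (u w : Fin (n+1)), u ≠ v → w ≠ v → G.Adj u v →
      ∀ C : Set (Fin (n+1)),
      (∀ I ∈ 𝒢, u ∈ I → v ∉ I → (I : Set (Fin (n+1))) ⊆ C) → w ∉ C →
      (𝒢.filter fun I => u ∈ I ∧ v ∉ I).card < (𝒢.filter fun I => v ∈ I ∧ w ∉ I).card := by
    intro u w hu hwv hadj C hsub hwC
    set B := 𝒢.filter fun I => u ∈ I ∧ v ∉ I with hB
    set T := 𝒢.filter (fun I : Finset (Fin (n+1)) =>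
      v ∈ I ∧ (I : Set (Fin (n+1))) ⊆ insert v C) with hT
    set D := 𝒢.filter fun I => v ∈ I ∧ w ∉ I with hD
    have hTD : T ⊆ D := by
      intro I hI
      rw [hT, Finset.mem_filter] at hI
      obtain ⟨hI𝒢, hvI, hIC⟩ := hI
      rw [hD, Finset.mem_filter]
      refine ⟨hI𝒢, hvI, fun hwI => ?_⟩
      rcases hIC hwI with h | h
      · exact hwv h
      · exact hwC h
    have himg : ∀ I ∈ B, insert v I ∈ T.erase ({v} : Finset (Fin (n+1))) := by
      intro I hI
      rw [hB, Finset.mem_filter] at hI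
      obtain ⟨hI𝒢, huI, hvI⟩ := hI
      have hIC : (I : Set (Fin (n+1))) ⊆ C := hsub I hI𝒢 huI hvI
      have hconn : (G.induce ((insert v I : Finset (Fin (n+1))) : Set (Fin (n+1)))).Connected := by
        rw [Finset.coe_insert]
        exact insertConnected G ((mem𝒢 I).mp hI𝒢) huI hadj.symm
      rw [Finset.mem_erase]
      constructor
      · intro h
        have hmem : u ∈ ({v} : Finset (Fin (n+1))) := h ▸ Finset.mem_insert_of_mem huI
        rw [Finset.mem_singleton] at hmem
        exact hu hmem
      · rw [hT, Finset.mem_filter]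
        refine ⟨(mem𝒢 _).mpr hconn, Finset.mem_insert_self v I, ?_⟩
        rw [Finset.coe_insert]
        exact Set.insert_subset_insert hIC
    have hinj : Set.InjOn (fun I => insert v I) (B : Set (Finset (Fin (n+1)))) := by
      intro I hI J hJ hIJ
      simp only [Finset.mem_coe, hB, Finset.mem_filter] at hI hJ
      have h1 : I = (insert v I).erase v := (Finset.erase_insert hI.2.2).symm
      have h2 : J = (insert v J).erase v := (Finset.erase_insert hJ.2.2).symm
      rw [h1, h2, show insert v I = insert v J from hIJ]
    have hvT : ({v} : Finset (Fin (n+1))) ∈ T := by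
      rw [hT, Finset.mem_filter]
      refine ⟨(mem𝒢 _).mpr ?_, Finset.mem_singleton_self v, ?_⟩
      · rw [Finset.coe_singleton]
        exact singletonConnected G v
      · rw [Finset.coe_singleton]
        exact Set.singleton_subset_iff.mpr (Set.mem_insert v C)
    calc B.card = (B.image fun I => insert v I).card := (Finset.card_image_of_injOn hinj).symm
      _ ≤ (T.erase ({v} : Finset (Fin (n+1)))).card := by
          apply Finset.card_le_card
          intro J hJ
          rw [Finset.mem_image] at hJ
          obtain ⟨I, hI, rfl⟩ := hJ
          exact himg I hI
      _ < T.card := Finset.card_erase_lt_of_mem hvT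
      _ ≤ D.card := Finset.card_le_card hTD
  -- splitting kOf
  have ksplit : ∀ u : Fin (n+1),
      kOf G u = (𝒢.filter fun I => u ∈ I ∧ v ∈ I).card + (𝒢.filter fun I => u ∈ I ∧ v ∉ I).card := by
    intro u
    have := Finset.card_filter_add_card_filter_not
      (s := 𝒢.filter fun I => u ∈ I) (p := fun I => v ∈ I)
    rw [Finset.filter_filter, Finset.filter_filter] at this
    exact (this.symm : _)
  have kvsplit : ∀ u : Fin (n+1),
      kOf G v = (𝒢.filter fun I => u ∈ I ∧ v ∈ I).card + (𝒢.filter fun I => v ∈ I ∧ u ∉ I).card := by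
    intro u
    have := Finset.card_filter_add_card_filter_not
      (s := 𝒢.filter fun I => v ∈ I) (p := fun I => u ∈ I)
    rw [Finset.filter_filter, Finset.filter_filter] at this
    have hcomm : (𝒢.filter fun I => v ∈ I ∧ u ∈ I) = (𝒢.filter fun I => u ∈ I ∧ v ∈ I) := by
      apply Finset.filter_congr
      intro I _
      exact ⟨fun ⟨a, b⟩ => ⟨b, a⟩, fun ⟨a, b⟩ => ⟨b, a⟩⟩
    rw [hcomm] at this
    exact (this.symm : _)
  -- assemble
  have i1 := keyIneq u1 u2 hu1v hu2v hu1adj C1 subC1 hu2notC1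
  have i2 := keyIneq u2 u1 hu2v hu1v hu2adj C2 subC2 hu1notC2
  have e1 := ksplit u1
  have e2 := ksplit u2
  have f1 := kvsplit u1
  have f2 := kvsplit u2
  have m1 := hmin u1
  have m2 := hmin u2
  omega
end

section
/- Let G be a connected simple graph on vertex set [n+1] with n ≥ 1, and let B(G) = { I ⊆ [n+1] : I nonempty, G|_I connected }. Then for every vertex i ∈ [n+1], n · k_i(G) ≥ |B(G)| − 1, where k_i(G) is the number of connected induced subgraphs of G containing i. -/
open scoped Classical

open SimpleGraph Finset

private lemma conn_insert {m : ℕ} (G : SimpleGraph (Fin m)) {I : Finset (Fin m)}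
    {u x : Fin m} (hI : (G.induce (I : Set (Fin m))).Connected) (hx : x ∈ I)
    (hadj : G.Adj u x) : (G.induce ((insert u I : Finset (Fin m)) : Set (Fin m))).Connected := by
  have hset : ((insert u I : Finset (Fin m)) : Set (Fin m)) = {u, x} ∪ (I : Set (Fin m)) := by
    ext y
    simp only [Finset.coe_insert, Set.mem_insert_iff, Set.mem_union, Finset.mem_coe]
    constructor
    · rintro (rfl | h) <;> tauto
    · rintro ((rfl | rfl) | h) <;> tauto
  rw [hset]
  exact SimpleGraph.induce_union_connected (SimpleGraph.induce_pair_connected_of_adj hadj).preconnected hI.preconnected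
    ⟨x, by simp, hx⟩

private lemma exists_extension {m : ℕ} (G : SimpleGraph (Fin m)) (hG : G.Connected)
    (i : Fin m) (d : ℕ) :
    ∀ I : Finset (Fin m), (G.induce (I : Set (Fin m))).Connected → i ∉ I →
      (∀ x ∈ I, d ≤ G.dist i x) → (∃ x ∈ I, G.dist i x = d) →
      ∃ J : Finset (Fin m), I ⊆ J ∧ i ∈ J ∧ (G.induce (J : Set (Fin m))).Connected ∧
        J.card = I.card + d ∧ ∀ x ∈ J, x ∉ I → G.dist i x < d := by
  induction d with
  | zero =>
    rintro I hc hi _ ⟨x, hx, hdx⟩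
    exact absurd ((hG.dist_eq_zero_iff.mp hdx) ▸ hx) hi
  | succ d ih =>
    rintro I hc hi hmin ⟨x, hx, hdx⟩
    obtain ⟨w, hw⟩ := hG.exists_walk_length_eq_dist x i
    rw [SimpleGraph.dist_comm, hdx] at hw
    cases w with
    | nil => simp at hw
    | @cons _ u _ hadj p =>
      simp only [SimpleGraph.Walk.length_cons, Nat.succ_inj] at hw
      have hdu_le : G.dist i u ≤ d := by
        rw [SimpleGraph.dist_comm]
        exact hw ▸ SimpleGraph.dist_le p
      have hdu_ge : d ≤ G.dist i u := by
        have h1 : G.dist i x ≤ G.dist i u + G.dist u x := hG.dist_triangle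
        have h2 : G.dist u x ≤ 1 := by
          simpa using SimpleGraph.dist_le hadj.symm.toWalk
        omega
      have hdu : G.dist i u = d := le_antisymm hdu_le hdu_ge
      have hu : u ∉ I := by
        intro h
        have := hmin u h
        omega
      have hconn' := conn_insert G hc hx hadj.symm
      rcases Nat.eq_zero_or_pos d with hd0 | hdpos
      · -- then u = i
        have hui' : i = u := hG.dist_eq_zero_iff.mp (by rw [hdu, hd0])
        refine ⟨insert u I, Finset.subset_insert _ _, hui' ▸ Finset.mem_insert_self u I,
          hconn', by rw [Finset.card_insert_of_notMem hu]; omega, ?_⟩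
        intro y hy hyI
        rcases Finset.mem_insert.mp hy with rfl | h
        · omega
        · exact absurd h hyI
      · have hiu : i ∉ insert u I := by
          intro h
          rcases Finset.mem_insert.mp h with rfl | h
          · rw [SimpleGraph.dist_self] at hdu; omega
          · exact hi h
        obtain ⟨J, hJsub, hJi, hJconn, hJcard, hJnew⟩ := ih (insert u I) hconn' hiu
          (by
            intro y hy
            rcases Finset.mem_insert.mp hy with rfl | h
            · omega
            · have := hmin y h; omega)
          ⟨u, Finset.mem_insert_self u I, hdu⟩
        refine ⟨J, (Finset.subset_insert _ _).trans hJsub, hJi, hJconn, ?_, ?_⟩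
        · rw [hJcard, Finset.card_insert_of_notMem hu]; omega
        · intro y hy hyI
          by_cases hy' : y ∈ insert u I
          · rcases Finset.mem_insert.mp hy' with rfl | h
            · omega
            · exact absurd h hyI
          · have := hJnew y hy hy'; omega

private lemma exists_ext' {m : ℕ} (G : SimpleGraph (Fin m)) (hG : G.Connected) (i : Fin m)
    (I : Finset (Fin m)) (hc : (G.induce (I : Set (Fin m))).Connected) (hne : I.Nonempty)
    (hi : i ∉ I) :
    ∃ J : Finset (Fin m), I ⊆ J ∧ i ∈ J ∧ (G.induce (J : Set (Fin m))).Connected ∧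
      (∀ x ∈ I, J.card - I.card ≤ G.dist i x) ∧
      (∀ x ∈ J, x ∉ I → G.dist i x < J.card - I.card) := by
  set d := (I.image (G.dist i)).min' (hne.image _) with hd
  obtain ⟨J, h1, h2, h3, h4, h5⟩ := exists_extension G hG i d I hc hi
    (fun x hx => Finset.min'_le _ _ (Finset.mem_image_of_mem _ hx))
    (by
      obtain ⟨y, hy⟩ := Finset.mem_image.mp ((I.image (G.dist i)).min'_mem (hne.image _))
      exact ⟨y, hy.1, hy.2⟩)
  have hcd : J.card - I.card = d := by omega
  exact ⟨J, h1, h2, h3, fun x hx => hcd ▸ (Finset.min'_le _ _ (Finset.mem_image_of_mem _ hx)),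
    fun x hx hxI => hcd ▸ h5 x hx hxI⟩

/-- For a connected simple graph `G` on `[n+1]` with `n ≥ 1` and
every vertex `i`, we have `n · k_i(G) ≥ |B(G)| − 1`. -/
theorem n_mul_k_ge_card_building_set_sub_one {n : ℕ} (hn : 1 ≤ n)
    (G : SimpleGraph (Fin (n + 1))) (hG : G.Connected) (i : Fin (n + 1)) :
    (graphBuildingSet G).card - 1 ≤ n * kOf G i := by
  classical
  set B := graphBuildingSet G with hBdef
  set Bi := B.filter (fun I => i ∈ I) with hBidef
  have hmemB : ∀ I : Finset (Fin (n+1)), I ∈ B ↔ (G.induce (I : Set (Fin (n+1)))).Connected := by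
    intro I
    simp [hBdef, graphBuildingSet]
  have huniv : (Finset.univ : Finset (Fin (n+1))) ∈ B := by
    rw [hmemB, Finset.coe_univ]
    exact G.induceUnivIso.connected_iff.mpr hG
  have hne_of_mem : ∀ I : Finset (Fin (n+1)), I ∈ B → I.Nonempty := by
    intro I hI
    rw [hmemB] at hI
    obtain ⟨⟨x, hx⟩⟩ := hI.nonempty
    exact ⟨x, hx⟩
  -- the injection
  set f : Finset (Fin (n+1)) → Finset (Fin (n+1)) × ℕ := fun I =>
    if h : (G.induce (I : Set (Fin (n+1)))).Connected ∧ I.Nonempty ∧ i ∉ I then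
      ((exists_ext' G hG i I h.1 h.2.1 h.2.2).choose, I.card)
    else (I, I.card) with hfdef
  -- decoding
  have hdecode : ∀ I ∈ B.erase Finset.univ,
      I = (f I).1.filter (fun x => (f I).1.card - (f I).2 ≤ G.dist i x) := by
    intro I hI
    have hIB : I ∈ B := Finset.mem_of_mem_erase hI
    have hIc : (G.induce (I : Set (Fin (n+1)))).Connected := (hmemB I).mp hIB
    by_cases hiI : i ∈ I
    · have : f I = (I, I.card) := by
        rw [hfdef]; simp [hiI]
      rw [this]
      simp
    · have hcond : (G.induce (I : Set (Fin (n+1)))).Connected ∧ I.Nonempty ∧ i ∉ I :=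
        ⟨hIc, hne_of_mem I hIB, hiI⟩
      have hfI : f I = ((exists_ext' G hG i I hcond.1 hcond.2.1 hcond.2.2).choose, I.card) := by
        rw [hfdef]; simp [hcond]
      obtain ⟨hsub, hiJ, hJc, hge, hlt⟩ :=
        (exists_ext' G hG i I hcond.1 hcond.2.1 hcond.2.2).choose_spec
      rw [hfI]
      ext x
      simp only [Finset.mem_filter]
      constructor
      · intro hx
        exact ⟨hsub hx, hge x hx⟩
      · rintro ⟨hxJ, hxd⟩
        by_contra hxI
        exact absurd hxd (not_le.mpr (hlt x hxJ hxI))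
  have hkey : (B.erase Finset.univ).card ≤ (Bi ×ˢ Finset.Icc 1 n).card := by
    apply Finset.card_le_card_of_injOn f
    · intro I hI
      have hIB : I ∈ B := Finset.mem_of_mem_erase hI
      have hIne : I ≠ Finset.univ := Finset.ne_of_mem_erase hI
      have hIc : (G.induce (I : Set (Fin (n+1)))).Connected := (hmemB I).mp hIB
      have hIcard1 : 1 ≤ I.card := Finset.card_pos.mpr (hne_of_mem I hIB)
      rw [Finset.mem_coe, Finset.mem_product]
      by_cases hiI : i ∈ I
      · have : f I = (I, I.card) := by rw [hfdef]; simp [hiI]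
        rw [this]
        refine ⟨Finset.mem_filter.mpr ⟨hIB, hiI⟩, Finset.mem_Icc.mpr ⟨hIcard1, ?_⟩⟩
        have : I.card < (Finset.univ : Finset (Fin (n+1))).card :=
          Finset.card_lt_card (Finset.ssubset_univ_iff.mpr hIne)
        simp only [Finset.card_univ, Fintype.card_fin] at this
        omega
      · have hcond : (G.induce (I : Set (Fin (n+1)))).Connected ∧ I.Nonempty ∧ i ∉ I :=
          ⟨hIc, hne_of_mem I hIB, hiI⟩
        have hfI : f I = ((exists_ext' G hG i I hcond.1 hcond.2.1 hcond.2.2).choose, I.card) := by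
          rw [hfdef]; simp [hcond]
        obtain ⟨hsub, hiJ, hJc, hge, hlt⟩ :=
          (exists_ext' G hG i I hcond.1 hcond.2.1 hcond.2.2).choose_spec
        rw [hfI]
        refine ⟨Finset.mem_filter.mpr ⟨(hmemB _).mpr hJc, hiJ⟩,
          Finset.mem_Icc.mpr ⟨hIcard1, ?_⟩⟩
        have hsub' : I ⊆ Finset.univ.erase i := by
          intro x hx
          exact Finset.mem_erase.mpr ⟨fun h => hiI (h ▸ hx), Finset.mem_univ x⟩
        have := Finset.card_le_card hsub'
        rw [Finset.card_erase_of_mem (Finset.mem_univ i)] at this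
        simp only [Finset.card_univ, Fintype.card_fin] at this
        omega
    · intro I1 h1 I2 h2 hf
      rw [hdecode I1 h1, hdecode I2 h2, hf]
  have hcard : (B.erase Finset.univ).card = B.card - 1 := Finset.card_erase_of_mem huniv
  have hprod : (Bi ×ˢ Finset.Icc 1 n).card = Bi.card * n := by
    rw [Finset.card_product, Nat.card_Icc]
    congr 1
  have : kOf G i = Bi.card := rfl
  rw [this, Nat.mul_comm]
  omega
end

section
/- Let G be a connected simple graph on [n+1], B = B(G) its graphical building set, and suppose k_{n+1}(G) is minimal among all k_i(G). For J ∈ B with |J| ≥ 2 and J = I ∪ {m} where I ∈ B, m ∉ I, |I| ≥ 2, define f(I) = (|B|_I| − 1)/(|I| − 1) where B|_I = { K ∈ B : K ⊆ I }. Then f(J) ≥ f(I). -/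
open scoped Classical

/-- The restricted building set `B|_I = {K ∈ B : K ⊆ I}`. -/
noncomputable def restrictedBS {m : ℕ} (G : SimpleGraph (Fin m))
    (I : Finset (Fin m)) : Finset (Finset (Fin m)) :=
  (graphBuildingSet G).filter fun K => K ⊆ I

/-- The function `f(I) = (|B|_I| − 1)/(|I| − 1)` for `|I| ≥ 2`. -/
noncomputable def fOf {m : ℕ} (G : SimpleGraph (Fin m)) (I : Finset (Fin m)) : ℚ :=
  ((restrictedBS G I).card - 1 : ℚ) / ((I.card - 1 : ℕ) : ℚ)

section Aux
variable {N : ℕ} {G : SimpleGraph (Fin N)}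

lemma mem_gbs_iff {S : Finset (Fin N)} :
    S ∈ graphBuildingSet G ↔ (G.induce (S : Set (Fin N))).Connected := by
  simp [graphBuildingSet]

lemma nonempty_of_mem_gbs {S : Finset (Fin N)} (h : S ∈ graphBuildingSet G) : S.Nonempty := by
  rw [mem_gbs_iff] at h
  obtain ⟨⟨x, hx⟩⟩ := h.nonempty
  exact ⟨x, hx⟩

lemma singleton_mem_gbs (v : Fin N) : ({v} : Finset (Fin N)) ∈ graphBuildingSet G := by
  rw [mem_gbs_iff]
  haveI : Nonempty ((({v} : Finset (Fin N)) : Set (Fin N))) := ⟨⟨v, by simp⟩⟩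
  refine ⟨fun a b => ?_⟩
  have ha : a = b := by
    have h1 := a.2
    have h2 := b.2
    simp only [Finset.coe_singleton, Set.mem_singleton_iff] at h1 h2
    exact Subtype.ext (h1.trans h2.symm)
  exact ha ▸ SimpleGraph.Reachable.refl _

lemma union_mem_gbs {S T : Finset (Fin N)} (hS : S ∈ graphBuildingSet G)
    (hT : T ∈ graphBuildingSet G) (hST : (S ∩ T).Nonempty) :
    S ∪ T ∈ graphBuildingSet G := by
  rw [mem_gbs_iff] at hS hT ⊢
  have hne : ((S : Set (Fin N)) ∩ (T : Set (Fin N))).Nonempty := by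
    obtain ⟨x, hx⟩ := hST
    rw [Finset.mem_inter] at hx
    exact ⟨x, hx.1, hx.2⟩
  have := SimpleGraph.induce_union_connected hS.preconnected hT.preconnected hne
  rwa [← Finset.coe_union] at this

lemma walkSupport_mem_gbs {x y : Fin N} (q : G.Walk x y) :
    q.support.toFinset ∈ graphBuildingSet G := by
  rw [mem_gbs_iff]
  have h := q.connected_induce_support
  have he : ((q.support.toFinset : Finset (Fin N)) : Set (Fin N)) = {v | v ∈ q.support} := by
    ext v; simp
  rw [he]
  exact h

end Aux


set_option maxHeartbeats 1000000 in
/-- Let `G` be a connected simple graph on `[n+1]` with `k_{n+1}`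
minimal. If `I ∈ B(G)` with `|I| ≥ 2`, `m ∉ I` and `J = I ∪ {m} ∈ B(G)`, then
`f(J) ≥ f(I)` where `f(I) = (|B|_I| − 1)/(|I| − 1)`. -/
theorem f_monotone_on_nested {n : ℕ} (G : SimpleGraph (Fin (n + 1)))
    (hG : G.Connected)
    (hmin : ∀ i : Fin (n + 1), kOf G (Fin.last n) ≤ kOf G i)
    (I J : Finset (Fin (n + 1))) (m : Fin (n + 1)) (hmI : m ∉ I)
    (hI : I ∈ graphBuildingSet G) (hIcard : 2 ≤ I.card)
    (hJdef : J = insert m I) (hJ : J ∈ graphBuildingSet G) :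
    fOf G I ≤ fOf G J := by
  have hmJ : m ∈ J := hJdef ▸ Finset.mem_insert_self m I
  have hIJ : I ⊆ J := hJdef ▸ Finset.subset_insert m I
  set k := I.card with hk
  have hJcard : J.card = k + 1 := by
    rw [hJdef, Finset.card_insert_of_notMem hmI]
  set H := G.induce (J : Set (Fin (n + 1))) with hH
  have hHconn : H.Connected := mem_gbs_iff.mp hJ
  have hmJ' : m ∈ (J : Set (Fin (n + 1))) := hmJ
  set d : Fin (n + 1) → ℕ := fun w =>
    if h : w ∈ J then H.dist ⟨m, hmJ'⟩ ⟨w, h⟩ else 0 with hd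
  -- the "path-to-m" family
  have hPex : ∀ v : Fin (n + 1), ∃ Pv : Finset (Fin (n + 1)),
      v ∈ J → (v ∈ Pv ∧ m ∈ Pv ∧ Pv ⊆ J ∧ Pv ∈ graphBuildingSet G ∧
        ∀ w ∈ Pv, w ≠ v → d w < d v) := by
    intro v
    by_cases hv : v ∈ J
    · obtain ⟨p, hp⟩ :=
        (hHconn.preconnected ⟨m, hmJ'⟩ ⟨v, hv⟩).exists_walk_length_eq_dist
      refine ⟨(p.support.map Subtype.val).toFinset, fun _ => ⟨?_, ?_, ?_, ?_, ?_⟩⟩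
      · rw [List.mem_toFinset]
        exact List.mem_map.mpr ⟨⟨v, hv⟩, p.end_mem_support, rfl⟩
      · rw [List.mem_toFinset]
        exact List.mem_map.mpr ⟨⟨m, hmJ'⟩, p.start_mem_support, rfl⟩
      · intro x hx
        rw [List.mem_toFinset, List.mem_map] at hx
        obtain ⟨⟨x', hx'⟩, _, rfl⟩ := hx
        exact hx'
      · -- connectedness of the support
        have hmap : (p.support.map Subtype.val).toFinset =
            (p.map (SimpleGraph.Embedding.induce (J : Set (Fin (n+1)))).toHom).support.toFinset := by
          rw [SimpleGraph.Walk.support_map]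
          rfl
        rw [hmap]
        exact walkSupport_mem_gbs _
      · intro w hw hwv
        rw [List.mem_toFinset, List.mem_map] at hw
        obtain ⟨⟨w', hw'⟩, hws, rfl⟩ := hw
        have hw2 : w' ∈ J := hw'
        have hdw : d w' = H.dist ⟨m, hmJ'⟩ ⟨w', hw'⟩ := by
          simp only [hd]; rw [dif_pos hw2]
        have hdv : d v = H.dist ⟨m, hmJ'⟩ ⟨v, hv⟩ := by
          simp only [hd]; rw [dif_pos hv]
        rw [hdw, hdv]
        set p1 := p.takeUntil ⟨w', hw'⟩ hws with hp1
        set p2 := p.dropUntil ⟨w', hw'⟩ hws with hp2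
        have hlen : p1.length + p2.length = p.length := by
          rw [← SimpleGraph.Walk.length_append, SimpleGraph.Walk.take_spec]
        have h1 : H.dist ⟨m, hmJ'⟩ ⟨w', hw'⟩ ≤ p1.length := SimpleGraph.dist_le p1
        have h2 : H.dist ⟨w', hw'⟩ ⟨v, hv⟩ ≤ p2.length := SimpleGraph.dist_le p2
        have h3 : H.dist ⟨m, hmJ'⟩ ⟨v, hv⟩ ≤
            H.dist ⟨m, hmJ'⟩ ⟨w', hw'⟩ + H.dist ⟨w', hw'⟩ ⟨v, hv⟩ :=
          hHconn.dist_triangle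
        have h4 : 0 < H.dist ⟨w', hw'⟩ ⟨v, hv⟩ :=
          hHconn.pos_dist_of_ne (by simpa [Subtype.ext_iff] using hwv)
        omega
    · exact ⟨∅, fun h => absurd h hv⟩
  choose P hP using hPex
  set A := restrictedBS G I with hA
  set C := (graphBuildingSet G).filter (fun T => T ⊆ J ∧ m ∈ T) with hC
  have hAmem : ∀ {S}, S ∈ A ↔ S ∈ graphBuildingSet G ∧ S ⊆ I := by
    intro S; rw [hA, restrictedBS, Finset.mem_filter]
  have hCmem : ∀ {T}, T ∈ C ↔ T ∈ graphBuildingSet G ∧ T ⊆ J ∧ m ∈ T := by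
    intro T; rw [hC, Finset.mem_filter]
  -- choose minimizing vertex
  have hsex : ∀ S : Finset (Fin (n + 1)), ∃ s,
      S ∈ A → (s ∈ S ∧ ∀ x ∈ S, d s ≤ d x) := by
    intro S
    by_cases hS : S ∈ A
    · obtain ⟨s, hs1, hs2⟩ :=
        S.exists_min_image d (nonempty_of_mem_gbs (hAmem.mp hS).1)
      exact ⟨s, fun _ => ⟨hs1, hs2⟩⟩
    · exact ⟨m, fun h => absurd h hS⟩
  choose sf hsf using hsex
  -- key facts about S ∈ A
  have hsfS : ∀ S ∈ A, sf S ∈ S := fun S hS => (hsf S hS).1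
  have hsfI : ∀ S ∈ A, sf S ∈ I := fun S hS => (hAmem.mp hS).2 (hsfS S hS)
  have hsfJ : ∀ S ∈ A, sf S ∈ J := fun S hS => hIJ (hsfI S hS)
  have hnotin : ∀ S ∈ A, ∀ w ∈ P (sf S), w ≠ sf S → w ∉ S := by
    intro S hS w hw hwne hwS
    have h5 := (hP (sf S) (hsfJ S hS)).2.2.2.2 w hw hwne
    have hmin' := (hsf S hS).2 w hwS
    omega
  -- recovery
  have hrec : ∀ S ∈ A, S = (S ∪ P (sf S)) \ (P (sf S) \ {sf S}) := by
    intro S hS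
    ext x
    simp only [Finset.mem_sdiff, Finset.mem_union, Finset.mem_singleton]
    constructor
    · intro hx
      refine ⟨Or.inl hx, fun hc => ?_⟩
      exact hnotin S hS x hc.1 hc.2 hx
    · rintro ⟨hx, hx2⟩
      rcases hx with hx | hx
      · exact hx
      · by_cases hxe : x = sf S
        · exact hxe ▸ hsfS S hS
        · exact absurd ⟨hx, hxe⟩ hx2
  -- the injection into Σ T ∈ C, T.erase m
  have hcard1 : A.card ≤ (C.sigma fun T => T.erase m).card := by
    apply Finset.card_le_card_of_injOn
      (fun S => (⟨S ∪ P (sf S), sf S⟩ : (_ : Finset (Fin (n+1))) × Fin (n+1)))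
    · intro S hS
      have hsJ := hsfJ S hS
      obtain ⟨hp1, hp2, hp3, hp4, _⟩ := hP (sf S) hsJ
      simp only [Finset.mem_coe, Finset.mem_sigma]
      constructor
      · rw [hCmem]
        refine ⟨union_mem_gbs (hAmem.mp hS).1 hp4 ⟨sf S, Finset.mem_inter.mpr ⟨hsfS S hS, hp1⟩⟩,
          Finset.union_subset (fun x hx => hIJ ((hAmem.mp hS).2 hx)) hp3,
          Finset.mem_union_right _ hp2⟩
      · refine Finset.mem_erase.mpr ⟨?_, Finset.mem_union_left _ (hsfS S hS)⟩
        intro he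
        exact hmI (he ▸ hsfI S hS)
    · intro S1 hS1 S2 hS2 heq
      have h1 : S1 ∪ P (sf S1) = S2 ∪ P (sf S2) := congrArg Sigma.fst heq
      have h2 : sf S1 = sf S2 := congrArg (fun x => x.2) heq
      rw [hrec S1 hS1, hrec S2 hS2, h1, h2]
  have hcard2 : (C.sigma fun T => T.erase m).card = ∑ T ∈ C, (T.erase m).card :=
    Finset.card_sigma _ _
  -- membership of J in C
  have hJC : J ∈ C := hCmem.mpr ⟨hJ, le_refl _, hmJ⟩
  set c := C.card with hc
  have hc1 : 1 ≤ c := Finset.card_pos.mpr ⟨J, hJC⟩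
  -- bound the sum
  have hsum : ∑ T ∈ C, (T.erase m).card ≤ k + (c - 1) * (k - 1) := by
    have hsplit : ∑ T ∈ C.erase J, (T.erase m).card + (J.erase m).card
        = ∑ T ∈ C, (T.erase m).card := Finset.sum_erase_add C _ hJC
    have hJerase : (J.erase m).card = k := by
      rw [hJdef, Finset.erase_insert hmI]
    have hbd : ∀ T ∈ C.erase J, (T.erase m).card ≤ k - 1 := by
      intro T hT
      obtain ⟨hTne, hTC⟩ := Finset.mem_erase.mp hT
      obtain ⟨_, hTJ, hmT⟩ := hCmem.mp hTC
      have hlt : T.card < J.card := Finset.card_lt_card (lt_of_le_of_ne hTJ hTne)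
      have := Finset.card_erase_of_mem hmT
      omega
    have hsb := Finset.sum_le_card_nsmul (C.erase J) _ (k - 1) hbd
    have hce : (C.erase J).card = c - 1 := Finset.card_erase_of_mem hJC
    simp only [smul_eq_mul] at hsb
    rw [hce] at hsb
    omega
  have hkey : A.card ≤ k + (c - 1) * (k - 1) := by
    calc A.card ≤ _ := hcard1
    _ = _ := hcard2
    _ ≤ _ := hsum
  -- b = a + c
  have hbsplit : (restrictedBS G J).card = A.card + c := by
    have h1 : (restrictedBS G J).filter (fun T => m ∈ T) = C := by
      ext T
      rw [Finset.mem_filter, hCmem]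
      unfold restrictedBS
      rw [Finset.mem_filter]
      tauto
    have h2 : (restrictedBS G J).filter (fun T => ¬ m ∈ T) = A := by
      ext T
      rw [Finset.mem_filter, hAmem]
      unfold restrictedBS
      rw [Finset.mem_filter]
      constructor
      · rintro ⟨⟨hg, hTJ⟩, hmT⟩
        refine ⟨hg, fun x hx => ?_⟩
        rcases Finset.mem_insert.mp (hJdef ▸ hTJ hx) with h | h
        · exact absurd (h ▸ hx) hmT
        · exact h
      · rintro ⟨hg, hTI⟩
        exact ⟨⟨hg, hTI.trans hIJ⟩, fun hmT => hmI (hTI hmT)⟩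
    rw [← Finset.card_filter_add_card_filter_not (s := restrictedBS G J)
      (p := fun T => m ∈ T), h1, h2]
    ring
  -- final arithmetic
  have hk2 : (2 : ℕ) ≤ k := hIcard
  unfold fOf
  rw [hbsplit, hJcard, ← hA, ← hk]
  have hd1 : (0 : ℚ) < ((k - 1 : ℕ) : ℚ) := by
    have : (1 : ℕ) ≤ k - 1 := by omega
    exact_mod_cast Nat.lt_of_lt_of_le Nat.zero_lt_one this
  have hd2 : (0 : ℚ) < ((k + 1 - 1 : ℕ) : ℚ) := by
    have : (1 : ℕ) ≤ k + 1 - 1 := by omega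
    exact_mod_cast Nat.lt_of_lt_of_le Nat.zero_lt_one this
  rw [div_le_div_iff₀ hd1 hd2]
  have hkeyQ : (A.card : ℚ) ≤ k + ((c : ℚ) - 1) * ((k : ℚ) - 1) := by
    have := hkey
    have hcast : ((k + (c - 1) * (k - 1) : ℕ) : ℚ) = k + ((c:ℚ) - 1) * ((k:ℚ) - 1) := by
      push_cast [Nat.cast_sub hc1, Nat.cast_sub (by omega : 1 ≤ k)]
      ring
    calc (A.card : ℚ) ≤ ((k + (c - 1) * (k - 1) : ℕ) : ℚ) := by exact_mod_cast this
    _ = _ := hcast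
  have he1 : ((k - 1 : ℕ) : ℚ) = (k : ℚ) - 1 := by
    push_cast [Nat.cast_sub (by omega : 1 ≤ k)]; ring
  have he2 : ((k + 1 - 1 : ℕ) : ℚ) = (k : ℚ) := by norm_num
  rw [he1, he2]
  push_cast
  nlinarith [hkeyQ, (by exact_mod_cast hc1 : (1:ℚ) ≤ (c:ℚ)),
    (by exact_mod_cast hk2 : (2:ℚ) ≤ (k:ℚ))]
end

section
/- Let G be a connected simple graph on [n+1] with n ≥ 2 and B = B(G). Suppose k_{n+1}(G) ≤ k_i(G) for all i. Then for every I ∈ B with |I| ≥ 2 and I ≠ [n+1], the inequality (|B| − k_{n+1}(G) − 1)/(n − 1) ≥ (|B|_I| − 1)/(|I| − 1) holds. -/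
open scoped Classical

open Finset

namespace Slope

variable {V : Type*} [Fintype V] [DecidableEq V] (G : SimpleGraph V)

/-- Restriction of `G` to vertex set `K`, as a graph on the same vertex type. -/
def GK (K : Finset V) : SimpleGraph V where
  Adj a b := G.Adj a b ∧ a ∈ K ∧ b ∈ K
  symm := ⟨fun a b ⟨h, ha, hb⟩ => ⟨h.symm, hb, ha⟩⟩
  loopless := ⟨fun a ⟨h, _, _⟩ => G.ne_of_adj h rfl⟩

/-- `K` induces a connected subgraph. -/
def connF (K : Finset V) : Prop := (G.induce (K : Set V)).Connected

variable {G}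

lemma GK_mono {K K' : Finset V} (h : K ⊆ K') : GK G K ≤ GK G K' :=
  fun _ _ ⟨ha, h1, h2⟩ => ⟨ha, h h1, h h2⟩

lemma GK_support_mem {K : Finset V} {a b : V} (p : (GK G K).Walk a b) (hb : b ∈ K) :
    ∀ v ∈ p.support, v ∈ K := by
  induction p with
  | nil => intro v hv; simp_all
  | cons h q ih =>
    intro v hv
    rcases List.mem_cons.mp (by simpa using hv) with rfl | hv'
    · exact h.2.1
    · exact ih hb v hv'

lemma reachable_GK_of_support_subset {K T : Finset V} {a b : V}
    (p : (GK G K).Walk a b) (hsub : ∀ v ∈ p.support, v ∈ T) :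
    (GK G T).Reachable a b := by
  induction p with
  | nil => exact SimpleGraph.Reachable.refl _
  | cons h q ih =>
    refine (SimpleGraph.Adj.reachable ?_).trans (ih fun v hv => hsub v (by simp [hv]))
    exact ⟨h.1, hsub _ (by simp), hsub _ (by simp [q.start_mem_support])⟩

lemma connF_iff {K : Finset V} :
    connF G K ↔ K.Nonempty ∧ ∀ a ∈ K, ∀ b ∈ K, (GK G K).Reachable a b := by
  constructor
  · intro h
    refine ⟨?_, ?_⟩
    · obtain ⟨⟨v, hv⟩⟩ := h.nonempty
      exact ⟨v, by simpa using hv⟩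
    · intro a ha b hb
      obtain ⟨w⟩ := h.preconnected ⟨a, by simpa using ha⟩ ⟨b, by simpa using hb⟩
      exact ⟨(w.map (⟨Subtype.val, fun {x y} hxy =>
        ⟨hxy, by simpa using x.2, by simpa using y.2⟩⟩ :
          G.induce (K : Set V) →g GK G K)).copy rfl rfl⟩
  · rintro ⟨⟨v0, hv0⟩, hreach⟩
    have key : ∀ {a b : V} (p : (GK G K).Walk a b) (ha : a ∈ K) (hb : b ∈ K),
        (G.induce (K : Set V)).Reachable ⟨a, by simpa using ha⟩ ⟨b, by simpa using hb⟩ := by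
      intro a b p
      induction p with
      | nil => intro ha hb; rfl
      | @cons a c b h q ih =>
        intro ha hb
        have h1 : (G.induce (K : Set V)).Adj ⟨a, by simpa using ha⟩ ⟨c, by simpa using h.2.2⟩ := h.1
        exact (SimpleGraph.Adj.reachable h1).trans (ih h.2.2 hb)
    haveI : Nonempty (↑(K : Set V)) := ⟨⟨v0, by simpa using hv0⟩⟩
    refine ⟨?_⟩
    rintro ⟨a, ha⟩ ⟨b, hb⟩
    have ha' : a ∈ K := by simpa using ha
    have hb' : b ∈ K := by simpa using hb
    obtain ⟨p⟩ := hreach a ha' b hb'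
    exact key p ha' hb'

lemma connF_nonempty {K : Finset V} (h : connF G K) : K.Nonempty := (connF_iff.mp h).1

lemma connF_singleton (x : V) : connF G {x} := by
  rw [connF_iff]
  refine ⟨⟨x, by simp⟩, ?_⟩
  intro a ha b hb
  simp only [Finset.mem_singleton] at ha hb
  subst ha; subst hb; rfl


lemma eq_of_len0 {H : SimpleGraph V} {a b : V} (q : H.Walk a b) (h : q.length = 0) : a = b := by
  cases q with
  | nil => rfl
  | cons h' q' => simp at h

lemma dist_add_one_le {H : SimpleGraph V} {x w v : V} (p : H.Walk x w)
    (hv : v ∈ p.support) (hne : v ≠ w) : H.dist x v + 1 ≤ p.length := by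
  have h1 : H.dist x v ≤ (p.takeUntil v hv).length := SimpleGraph.dist_le _
  have h2 := congrArg SimpleGraph.Walk.length (p.take_spec hv)
  rw [SimpleGraph.Walk.length_append] at h2
  have h3 : (p.dropUntil v hv).length ≠ 0 := fun h0 => hne (eq_of_len0 _ h0)
  omega

lemma exists_noncut {K I : Finset V} (hK : connF G K) (hI : connF G I)
    (hsub : I ⊆ K) (hne : I ≠ K) :
    ∃ u ∈ K, u ∉ I ∧ connF G (K.erase u) := by
  obtain ⟨r, hr⟩ := connF_nonempty hI
  have hKI : (K \ I).Nonempty := by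
    rw [Finset.sdiff_nonempty]
    intro h
    exact hne (Finset.Subset.antisymm hsub h)
  obtain ⟨u, hu, hmax⟩ := Finset.exists_max_image (K \ I) (fun v => (GK G K).dist r v) hKI
  have huK : u ∈ K := (Finset.mem_sdiff.mp hu).1
  have huI : u ∉ I := (Finset.mem_sdiff.mp hu).2
  refine ⟨u, huK, huI, ?_⟩
  rw [connF_iff]
  have hrK := hsub hr
  have hrE : r ∈ K.erase u := Finset.mem_erase.mpr ⟨fun h => huI (h ▸ hr), hrK⟩
  have main : ∀ w ∈ K.erase u, (GK G (K.erase u)).Reachable r w := by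
    intro w hw
    obtain ⟨hwne, hwK⟩ := Finset.mem_erase.mp hw
    by_cases hwI : w ∈ I
    · exact ((connF_iff.mp hI).2 r hr w hwI).mono
        (GK_mono (fun v hv => Finset.mem_erase.mpr ⟨fun h => huI (h ▸ hv), hsub hv⟩))
    · have hreach : (GK G K).Reachable r w := (connF_iff.mp hK).2 r hrK w hwK
      obtain ⟨p, hpath, hplen⟩ := hreach.exists_path_of_dist
      have hus : u ∉ p.support := by
        intro hus
        have h1 : (GK G K).dist r u + 1 ≤ p.length := dist_add_one_le p hus (Ne.symm hwne)
        have h2 : (GK G K).dist r w ≤ (GK G K).dist r u :=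
          hmax w (Finset.mem_sdiff.mpr ⟨hwK, hwI⟩)
        omega
      exact reachable_GK_of_support_subset p
        (fun v hv => Finset.mem_erase.mpr ⟨fun h => hus (h ▸ hv), GK_support_mem p hwK v hv⟩)
  exact ⟨⟨r, hrE⟩, fun a ha b hb => ((main a ha).symm.trans (main b hb))⟩

lemma connF_union_walk {K S : Finset V} {x s : V} (hS : connF G S) (hs : s ∈ S)
    (p : (GK G K).Walk x s) :
    connF G (S ∪ p.support.toFinset) := by
  rw [connF_iff]
  have hST : S ⊆ S ∪ p.support.toFinset := Finset.subset_union_left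
  have key : ∀ w ∈ S ∪ p.support.toFinset, (GK G (S ∪ p.support.toFinset)).Reachable w s := by
    intro w hw
    rcases Finset.mem_union.mp hw with h | h
    · exact ((connF_iff.mp hS).2 w h s hs).mono (GK_mono hST)
    · have hws : w ∈ p.support := List.mem_toFinset.mp h
      exact reachable_GK_of_support_subset (p.dropUntil w hws)
        (fun v hv => Finset.mem_union_right _
          (List.mem_toFinset.mpr (p.support_dropUntil_subset hws hv)))
  exact ⟨⟨s, hST hs⟩, fun a ha b hb => (key a ha).trans (key b hb).symm⟩

lemma exists_T {K S : Finset V} {x : V} (hK : connF G K) (hx : x ∈ K)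
    (hS : connF G S) (hSne : S.Nonempty) (hSK : S ⊆ K) (hxS : x ∉ S) :
    ∃ (T : Finset V) (l : ℕ), S ⊆ T ∧ T ⊆ K ∧ connF G T ∧ x ∈ T ∧
      T.card = S.card + l ∧ 1 ≤ l ∧
      (∀ v ∈ T, v ∉ S → (GK G K).dist x v < l) ∧
      (∀ s' ∈ S, l ≤ (GK G K).dist x s') := by
  obtain ⟨s, hsS, hsmin⟩ := Finset.exists_min_image S (fun v => (GK G K).dist x v) hSne
  have hreach : (GK G K).Reachable x s := (connF_iff.mp hK).2 x hx s (hSK hsS)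
  obtain ⟨p, hpath, hplen⟩ := hreach.exists_path_of_dist
  have hl1 : 1 ≤ (GK G K).dist x s := by
    rcases Nat.eq_zero_or_pos ((GK G K).dist x s) with h0 | h1
    · exact absurd (eq_of_len0 p (by omega) ▸ hsS) hxS
    · exact h1
  have honly : ∀ v ∈ p.support, v ∈ S → v = s := by
    intro v hv hvS
    by_contra hvne
    have h1 := dist_add_one_le p hv hvne
    have h2 := hsmin v hvS
    omega
  refine ⟨S ∪ p.support.toFinset, (GK G K).dist x s, Finset.subset_union_left, ?_,
    connF_union_walk hS hsS p, ?_, ?_, hl1, ?_, hsmin⟩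
  · intro v hv
    rcases Finset.mem_union.mp hv with h | h
    · exact hSK h
    · exact GK_support_mem p (hSK hsS) v (List.mem_toFinset.mp h)
  · exact Finset.mem_union_right _ (List.mem_toFinset.mpr p.start_mem_support)
  · have hnodup : p.support.Nodup := hpath.support_nodup
    have hcard_supp : p.support.toFinset.card = (GK G K).dist x s + 1 := by
      rw [List.toFinset_card_of_nodup hnodup, SimpleGraph.Walk.length_support, hplen]
    have hinter : S ∩ p.support.toFinset = {s} := by
      ext v
      simp only [Finset.mem_inter, Finset.mem_singleton, List.mem_toFinset]
      constructor
      · rintro ⟨h1, h2⟩; exact honly v h2 h1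
      · rintro rfl; exact ⟨hsS, List.mem_toFinset.mp (List.mem_toFinset.mpr p.end_mem_support)⟩
    have hcu := Finset.card_union_add_card_inter S p.support.toFinset
    rw [hinter, hcard_supp, Finset.card_singleton] at hcu
    omega
  · intro v hv hvS
    have hvsupp : v ∈ p.support := by
      rcases Finset.mem_union.mp hv with h | h
      · exact absurd h hvS
      · exact List.mem_toFinset.mp h
    have hvne : v ≠ s := fun h => hvS (h ▸ hsS)
    have := dist_add_one_le p hvsupp hvne
    omega

variable (G) in
/-- Connected subsets of `K`. -/
noncomputable def CS (K : Finset V) : Finset (Finset V) :=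
  Finset.univ.filter fun S => S ⊆ K ∧ connF G S

lemma mem_CS {K S : Finset V} : S ∈ CS G K ↔ S ⊆ K ∧ connF G S := by
  simp [CS]

lemma CS_erase {K : Finset V} (y : V) :
    CS G (K.erase y) = (CS G K).filter fun S => y ∉ S := by
  ext S
  simp only [mem_CS, Finset.mem_filter, Finset.subset_erase]
  tauto

lemma FF_split {K : Finset V} (y : V) :
    (CS G K).card = (CS G (K.erase y)).card + ((CS G K).filter fun S => y ∈ S).card := by
  rw [CS_erase]
  have := Finset.card_filter_add_card_filter_not (s := CS G K)
    (p := fun S => y ∈ S)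
  omega

lemma lemC {K : Finset V} {x y : V} (hK : connF G K) (hx : x ∈ K) (hy : y ∈ K)
    (hxy : x ≠ y) :
    ((CS G K).filter fun S => y ∈ S ∧ x ∉ S).card ≤
      (K.card - 2) * ((CS G K).filter fun S => x ∈ S ∧ y ∈ S).card + 1 := by
  set A := (CS G K).filter fun S => y ∈ S ∧ x ∉ S with hA
  set D := (CS G K).filter fun S => x ∈ S ∧ y ∈ S with hD
  have hKx : (K.erase x).card = K.card - 1 := Finset.card_erase_of_mem hx
  have hcard_le : ∀ S ∈ A, S.card ≤ K.card - 1 := by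
    intro S hS
    rw [hA, Finset.mem_filter, mem_CS] at hS
    have : S ⊆ K.erase x := Finset.subset_erase.mpr ⟨hS.1.1, hS.2.2⟩
    calc S.card ≤ (K.erase x).card := Finset.card_le_card this
    _ = K.card - 1 := hKx
  -- big sets
  have hA1 : (A.filter fun S => S.card + 1 = K.card).card ≤ 1 := by
    refine Finset.card_le_one.mpr ?_
    intro S1 h1 S2 h2
    have key : ∀ S ∈ A.filter fun S => S.card + 1 = K.card, S = K.erase x := by
      intro S hS
      rw [Finset.mem_filter] at hS
      obtain ⟨hSA, hSc⟩ := hS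
      rw [hA, Finset.mem_filter, mem_CS] at hSA
      have hsub : S ⊆ K.erase x := Finset.subset_erase.mpr ⟨hSA.1.1, hSA.2.2⟩
      exact Finset.eq_of_subset_of_card_le hsub (by omega)
    rw [key S1 h1, key S2 h2]
  -- small sets: injection
  have hA2 : (A.filter fun S => S.card + 1 ≠ K.card).card ≤ (K.card - 2) * D.card := by
    have hKcard1 : 1 ≤ K.card := Finset.card_pos.mpr ⟨x, hx⟩
    have hex : ∀ S ∈ A.filter (fun S => S.card + 1 ≠ K.card),
        ∃ (T : Finset V) (l : ℕ), S ⊆ T ∧ T ⊆ K ∧ connF G T ∧ x ∈ T ∧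
          T.card = S.card + l ∧ 1 ≤ l ∧
          (∀ v ∈ T, v ∉ S → (GK G K).dist x v < l) ∧
          (∀ s' ∈ S, l ≤ (GK G K).dist x s') := by
      intro S hS
      rw [Finset.mem_filter, hA, Finset.mem_filter, mem_CS] at hS
      exact exists_T hK hx hS.1.1.2 ⟨y, hS.1.2.1⟩ hS.1.1.1 hS.1.2.2
    choose! f l hf1 hf2 hf3 hf4 hf5 hf6 hf7 hf8 using hex
    have := Finset.card_le_card_of_injOn (s := A.filter fun S => S.card + 1 ≠ K.card)
      (f := fun S => (f S, S.card))
      (t := D ×ˢ Finset.Ico 1 (K.card - 1)) ?_ ?_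
    · rw [Finset.card_product, Nat.card_Ico] at this
      calc (A.filter fun S => S.card + 1 ≠ K.card).card ≤ D.card * (K.card - 1 - 1) := this
      _ = (K.card - 2) * D.card := by rw [mul_comm]; congr 1
    · intro S hS
      simp only [Finset.mem_coe] at hS ⊢
      have hmemA := hS
      rw [Finset.mem_filter] at hmemA
      obtain ⟨hSA, hSc⟩ := hmemA
      have hSA' := hSA
      rw [hA, Finset.mem_filter, mem_CS] at hSA'
      rw [Finset.mem_product]
      constructor
      · show f S ∈ D
        rw [hD, Finset.mem_filter, mem_CS]
        exact ⟨⟨hf2 S hS, hf3 S hS⟩, hf4 S hS, hf1 S hS hSA'.2.1⟩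
      · show S.card ∈ Finset.Ico 1 (K.card - 1)
        rw [Finset.mem_Ico]
        have h1 : 1 ≤ S.card := Finset.card_pos.mpr ⟨y, hSA'.2.1⟩
        have h2 := hcard_le S hSA
        constructor
        · exact h1
        · omega
    · intro S1 h1 S2 h2 heq
      simp only [Prod.mk.injEq] at heq
      obtain ⟨hT, hc⟩ := heq
      have h1' : S1 ∈ A.filter (fun S => S.card + 1 ≠ K.card) := Finset.mem_coe.mp h1
      have h2' : S2 ∈ A.filter (fun S => S.card + 1 ≠ K.card) := Finset.mem_coe.mp h2
      have hl : l S1 = l S2 := by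
        have e1 := hf5 S1 h1'
        have e2 := hf5 S2 h2'
        rw [hT] at e1
        omega
      have hsub : S2 ⊆ S1 := by
        intro v hv
        by_contra hvS1
        have hvT : v ∈ f S1 := hT ▸ (hf1 S2 h2' hv)
        have d1 := hf7 S1 h1' v hvT hvS1
        have d2 := hf8 S2 h2' v hv
        omega
      exact ((Finset.eq_of_subset_of_card_le hsub (le_of_eq hc)).symm)
  have htot : (A.filter fun S => S.card + 1 = K.card).card
      + (A.filter fun S => S.card + 1 ≠ K.card).card = A.card := by
    have := Finset.card_filter_add_card_filter_not (s := A)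
      (p := fun S => S.card + 1 = K.card)
    simpa using this
  omega

lemma CS_singleton (x : V) : CS G {x} = {({x} : Finset V)} := by
  ext S
  simp only [mem_CS, Finset.mem_singleton]
  constructor
  · rintro ⟨hsub, hconn⟩
    rcases Finset.subset_singleton_iff.mp hsub with rfl | rfl
    · exact absurd (connF_nonempty hconn) (by simp)
    · rfl
  · rintro rfl
    exact ⟨Finset.Subset.refl _, connF_singleton x⟩

lemma lemB : ∀ (m : ℕ) (K : Finset V), K.card = m → connF G K → ∀ x ∈ K,
    (CS G K).card ≤ (K.card - 1) * ((CS G K).filter fun S => x ∈ S).card + 1 := by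
  intro m
  induction m using Nat.strong_induction_on with
  | _ m ih =>
  intro K hm hK x hx
  rcases Nat.lt_or_ge m 2 with hm2 | hm2
  · have h1 : K.card = 1 := by
      have := Finset.card_pos.mpr ⟨x, hx⟩
      omega
    have hKx : K = {x} := by
      obtain ⟨z, hz⟩ := Finset.card_eq_one.mp h1
      subst hz
      have : x = z := by simpa using hx
      subst this; rfl
    rw [hKx, CS_singleton]
    simp
  · obtain ⟨y, hyK, hyx, hconn'⟩ := exists_noncut hK (connF_singleton x)
      (Finset.singleton_subset_iff.mpr hx)
      (by intro h; rw [← h] at hm; simp at hm; omega)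
    have hyx' : y ≠ x := by simpa using hyx
    have hxK' : x ∈ K.erase y := Finset.mem_erase.mpr ⟨hyx'.symm, hx⟩
    have hcard' : (K.erase y).card = m - 1 := by rw [Finset.card_erase_of_mem hyK, hm]
    have IH := ih (m - 1) (by omega) (K.erase y) hcard' hconn' x hxK'
    rw [hcard'] at IH
    set a := ((CS G (K.erase y)).filter fun S => x ∈ S).card with ha
    set d := ((CS G K).filter fun S => x ∈ S ∧ y ∈ S).card with hd
    set e := ((CS G K).filter fun S => y ∈ S ∧ x ∉ S).card with he
    have hsplit1 : (CS G K).card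
        = (CS G (K.erase y)).card + ((CS G K).filter fun S => y ∈ S).card := FF_split y
    have hsplit2 : ((CS G K).filter fun S => y ∈ S).card = d + e := by
      have h1 := Finset.card_filter_add_card_filter_not
        (s := (CS G K).filter fun S => y ∈ S) (p := fun S => x ∈ S)
      rw [Finset.filter_filter, Finset.filter_filter] at h1
      have e1 : (CS G K).filter (fun S => y ∈ S ∧ x ∈ S)
          = (CS G K).filter (fun S => x ∈ S ∧ y ∈ S) := by
        ext S; simp only [Finset.mem_filter]; tauto
      have e2 : (CS G K).filter (fun S => y ∈ S ∧ ¬ x ∈ S)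
          = (CS G K).filter (fun S => y ∈ S ∧ x ∉ S) := rfl
      rw [e1, e2] at h1
      omega
    have hsplit3 : ((CS G K).filter fun S => x ∈ S).card = a + d := by
      have h1 := Finset.card_filter_add_card_filter_not
        (s := (CS G K).filter fun S => x ∈ S) (p := fun S => y ∈ S)
      rw [Finset.filter_filter, Finset.filter_filter] at h1
      have e1 : (CS G K).filter (fun S => x ∈ S ∧ y ∈ S)
          = (CS G K).filter (fun S => x ∈ S ∧ y ∈ S) := rfl
      have e2 : (CS G K).filter (fun S => x ∈ S ∧ ¬ y ∈ S)
          = (CS G (K.erase y)).filter (fun S => x ∈ S) := by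
        rw [CS_erase, Finset.filter_filter]
        ext S; simp only [Finset.mem_filter]; tauto
      rw [e2] at h1
      omega
    have hC : e ≤ (K.card - 2) * d + 1 := lemC hK hx hyK hyx'.symm
    have ha1 : 1 ≤ a := by
      refine Finset.card_pos.mpr ⟨{x}, ?_⟩
      rw [Finset.mem_filter, mem_CS]
      exact ⟨⟨Finset.singleton_subset_iff.mpr hxK', connF_singleton x⟩, Finset.mem_singleton_self x⟩
    obtain ⟨M, rfl⟩ : ∃ M, m = M + 2 := ⟨m - 2, by omega⟩
    rw [hm] at hC ⊢
    have hIH' : (CS G (K.erase y)).card ≤ M * a + 1 := by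
      have : M + 2 - 1 - 1 = M := by omega
      rw [this] at IH
      exact IH
    have hC' : e ≤ M * d + 1 := by
      have : M + 2 - 2 = M := by omega
      rwa [this] at hC
    have hgoal : M + 2 - 1 = M + 1 := by omega
    rw [hgoal, hsplit1, hsplit2, hsplit3]
    nlinarith [ha1, hIH', hC']

lemma chain {I : Finset V} (hI : connF G I) (ht : 2 ≤ I.card) :
    ∀ (m : ℕ) (K : Finset V), K.card = m → connF G K → I ⊆ K →
      ((K.card : ℤ) - 1) * ((CS G I).card - 1) ≤ ((I.card : ℤ) - 1) * ((CS G K).card - 1) := by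
  intro m
  induction m using Nat.strong_induction_on with
  | _ m ih =>
  intro K hm hK hIK
  rcases eq_or_ne I K with rfl | hne
  · exact le_of_eq (by ring)
  · obtain ⟨u, huK, huI, hconn'⟩ := exists_noncut hK hI hIK hne
    have hsub' : I ⊆ K.erase u := Finset.subset_erase.mpr ⟨hIK, huI⟩
    have hcard' : (K.erase u).card = m - 1 := by rw [Finset.card_erase_of_mem huK, hm]
    have htm : I.card + 1 ≤ m := by
      rw [← hm]
      exact Finset.card_lt_card (Finset.ssubset_iff_subset_ne.mpr ⟨hIK, hne⟩)
    have IH := ih (m - 1) (by omega) (K.erase u) hcard' hconn' hsub'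
    rw [hcard'] at IH
    have hB := lemB K.card K rfl hK u huK
    -- pass to ℤ
    set FI : ℤ := ((CS G I).card : ℤ) with hFI
    set FB : ℤ := ((CS G K).card : ℤ) with hFB
    set FB' : ℤ := ((CS G (K.erase u)).card : ℤ) with hFB'
    set c : ℤ := (((CS G K).filter fun S => u ∈ S).card : ℤ) with hc
    have hsplitZ : FB = FB' + c := by
      have := FF_split (G := G) (K := K) u
      rw [hFB, hFB', hc, this]
      push_cast
      ring
    have hBZ : FB ≤ ((m : ℤ) - 1) * c + 1 := by
      rw [hFB, hc]
      have h2 : (K.card : ℤ) = (m : ℤ) := by exact_mod_cast hm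
      calc ((CS G K).card : ℤ) ≤ ((K.card - 1) * ((CS G K).filter fun S => u ∈ S).card + 1 : ℕ) := by
            exact_mod_cast hB
      _ = ((K.card : ℤ) - 1) * (((CS G K).filter fun S => u ∈ S).card : ℤ) + 1 := by
            have h1 : 1 ≤ K.card := Finset.card_pos.mpr ⟨u, huK⟩
            push_cast [h1]
            ring
      _ = ((m : ℤ) - 1) * (((CS G K).filter fun S => u ∈ S).card : ℤ) + 1 := by rw [h2]
    have hIHZ : ((m : ℤ) - 2) * (FI - 1) ≤ ((I.card : ℤ) - 1) * (FB' - 1) := by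
      have h3 : ((m - 1 : ℕ) : ℤ) = (m : ℤ) - 1 := by
        have : 1 ≤ m := by omega
        push_cast [this]; ring
      rw [h3] at IH
      calc ((m : ℤ) - 2) * (FI - 1) = ((m : ℤ) - 1 - 1) * (FI - 1) := by ring
      _ ≤ _ := IH
    have hm3 : 3 ≤ m := by omega
    have hFB'le : FB' ≤ ((m : ℤ) - 2) * c + 1 := by
      have := hsplitZ
      linarith [hBZ]
    have hmul : ((m : ℤ) - 2) * (FI - 1) ≤ ((m : ℤ) - 2) * (((I.card : ℤ) - 1) * c) := by
      calc ((m : ℤ) - 2) * (FI - 1) ≤ ((I.card : ℤ) - 1) * (FB' - 1) := hIHZ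
      _ ≤ ((I.card : ℤ) - 1) * (((m : ℤ) - 2) * c) := by
          refine mul_le_mul_of_nonneg_left (by linarith) ?_
          have : (2 : ℤ) ≤ (I.card : ℤ) := by exact_mod_cast ht
          linarith
      _ = ((m : ℤ) - 2) * (((I.card : ℤ) - 1) * c) := by ring
    have hflc : FI - 1 ≤ ((I.card : ℤ) - 1) * c := by
      refine le_of_mul_le_mul_left hmul ?_
      have : (3 : ℤ) ≤ (m : ℤ) := by exact_mod_cast hm3
      linarith
    have h2 : (K.card : ℤ) = (m : ℤ) := by exact_mod_cast hm
    rw [h2, hsplitZ]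
    linarith [hIHZ, hflc]
end Slope
/-- Let `G` be a connected simple graph on `[n+1]`, `n ≥ 2`, with
`k_{n+1}` minimal. For every `I ∈ B(G)` with `|I| ≥ 2` and `I ≠ [n+1]`,
`(|B| − k_{n+1} − 1)/(n − 1) ≥ (|B|_I| − 1)/(|I| − 1)`. -/
theorem slope_inequality {n : ℕ} (hn : 2 ≤ n) (G : SimpleGraph (Fin (n + 1)))
    (hG : G.Connected)
    (hmin : ∀ i : Fin (n + 1), kOf G (Fin.last n) ≤ kOf G i)
    (I : Finset (Fin (n + 1))) (hI : I ∈ graphBuildingSet G)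
    (hIcard : 2 ≤ I.card) (hIproper : I ≠ Finset.univ) :
    ((restrictedBS G I).card - 1 : ℚ) / ((I.card - 1 : ℕ) : ℚ) ≤
      ((graphBuildingSet G).card - (kOf G (Fin.last n)) - 1 : ℚ) / ((n - 1 : ℕ) : ℚ) := by
  classical
  have hconnI : Slope.connF G I := by
    have := hI
    rw [graphBuildingSet, Finset.mem_filter] at this
    exact this.2
  have hconnU : Slope.connF G (Finset.univ : Finset (Fin (n + 1))) := by
    show (G.induce ((Finset.univ : Finset (Fin (n+1))) : Set (Fin (n+1)))).Connected
    rw [Finset.coe_univ]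
    exact ((SimpleGraph.induceUnivIso G).connected_iff).mpr hG
  obtain ⟨u, -, huI, hconnE⟩ :=
    Slope.exists_noncut hconnU hconnI (Finset.subset_univ I) hIproper
  have hcardE : (Finset.univ.erase u).card = n := by
    rw [Finset.card_erase_of_mem (Finset.mem_univ u), Finset.card_univ, Fintype.card_fin]
    omega
  have hchain := Slope.chain hconnI hIcard n (Finset.univ.erase u) hcardE hconnE
    (Finset.subset_erase.mpr ⟨Finset.subset_univ I, huI⟩)
  rw [hcardE] at hchain
  have hBS : graphBuildingSet G = Slope.CS G Finset.univ := by
    ext S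
    simp [graphBuildingSet, Slope.mem_CS, Slope.connF]
  have hRBS : restrictedBS G I = Slope.CS G I := by
    ext S
    simp only [restrictedBS, graphBuildingSet, Slope.mem_CS, Slope.connF,
      Finset.mem_filter, Finset.mem_univ, true_and]
    tauto
  have hsplit : (Slope.CS G Finset.univ).card
      = (Slope.CS G (Finset.univ.erase u)).card + kOf G u := by
    have h0 := Slope.FF_split (G := G) (K := (Finset.univ : Finset (Fin (n + 1)))) u
    rw [h0]
    congr 1
    rw [kOf, hBS]
  have hchain' : ((n : ℤ) - 1) * (((restrictedBS G I).card : ℤ) - 1)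
      ≤ ((I.card : ℤ) - 1) * (((graphBuildingSet G).card : ℤ)
          - (kOf G (Fin.last n) : ℤ) - 1) := by
    have e2 : ((Slope.CS G (Finset.univ.erase u)).card : ℤ)
        = ((graphBuildingSet G).card : ℤ) - (kOf G u : ℤ) := by
      rw [hBS, hsplit]
      push_cast
      ring
    have hku : (kOf G (Fin.last n) : ℤ) ≤ (kOf G u : ℤ) := by exact_mod_cast hmin u
    have ht2 : (2 : ℤ) ≤ (I.card : ℤ) := by exact_mod_cast hIcard
    calc ((n : ℤ) - 1) * (((restrictedBS G I).card : ℤ) - 1)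
        = ((n : ℤ) - 1) * (((Slope.CS G I).card : ℤ) - 1) := by rw [hRBS]
      _ ≤ ((I.card : ℤ) - 1) * (((Slope.CS G (Finset.univ.erase u)).card : ℤ) - 1) := hchain
      _ = ((I.card : ℤ) - 1) * (((graphBuildingSet G).card : ℤ) - (kOf G u : ℤ) - 1) := by
          rw [e2]
      _ ≤ ((I.card : ℤ) - 1) * (((graphBuildingSet G).card : ℤ)
            - (kOf G (Fin.last n) : ℤ) - 1) := by
          refine mul_le_mul_of_nonneg_left (by linarith) (by linarith)
  have pos1 : (0 : ℚ) < ((I.card - 1 : ℕ) : ℚ) := by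
    have : 0 < I.card - 1 := by omega
    exact_mod_cast this
  have pos2 : (0 : ℚ) < ((n - 1 : ℕ) : ℚ) := by
    have : 0 < n - 1 := by omega
    exact_mod_cast this
  rw [div_le_div_iff₀ pos1 pos2]
  have c1 : ((n - 1 : ℕ) : ℚ) = (n : ℚ) - 1 := by
    have : 1 ≤ n := by omega
    push_cast [this]
    ring
  have c2 : ((I.card - 1 : ℕ) : ℚ) = (I.card : ℚ) - 1 := by
    have : 1 ≤ I.card := by omega
    push_cast [this]
    ring
  rw [c1, c2]
  have hQ : ((n : ℚ) - 1) * (((restrictedBS G I).card : ℚ) - 1)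
      ≤ ((I.card : ℚ) - 1) * (((graphBuildingSet G).card : ℚ)
          - (kOf G (Fin.last n) : ℚ) - 1) := by exact_mod_cast hchain'
  linear_combination hQ
end

section
/- Let B be a building set on [n+1] with [n+1] ∈ B, and let G be such that B = B(G) for a connected simple graph G (or more generally let B be graphical). Then for every I ∈ B with I ≠ [n+1], there exists J ∈ B with I ⊆ J and [n+1] \ J a singleton. -/
open scoped Classical

/-- Along any walk from inside `s` to outside `s`, there is a crossing edge. -/
lemma exists_crossing_edge {V : Type*} {G : SimpleGraph V} {s : Set V} :
    ∀ {a b : V}, G.Walk a b → a ∈ s → b ∉ s →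
      ∃ u ∈ s, ∃ v ∉ s, G.Adj u v := by
  intro a b p
  induction p with
  | nil => intro ha hb; exact absurd ha hb
  | @cons a c b h q ih =>
    intro ha hb
    by_cases hm : c ∈ s
    · exact ih hm hb
    · exact ⟨a, ha, c, hm, h⟩

lemma grow_to_coatom {n : ℕ} (G : SimpleGraph (Fin (n + 1)))
    (hG : G.Connected) :
    ∀ (k : ℕ) (I : Finset (Fin (n + 1))),
      (Finset.univ \ I).card = k → 0 < k →
      (G.induce (I : Set (Fin (n + 1)))).Connected →
      ∃ j : Fin (n + 1), I ⊆ Finset.univ.erase j ∧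
        (G.induce ((Finset.univ.erase j : Finset (Fin (n + 1))) : Set (Fin (n + 1)))).Connected := by
  intro k
  induction k with
  | zero => intro I h h0; omega
  | succ k ih =>
    intro I hcard _ hconn
    rcases Nat.eq_zero_or_pos k with hk | hk
    · -- complement is a singleton
      obtain ⟨j, hj⟩ := Finset.card_eq_one.mp (by omega : (Finset.univ \ I).card = 1)
      have hIj : I = Finset.univ.erase j := by
        have hI : I = Finset.univ \ {j} := by
          rw [← hj, Finset.sdiff_sdiff_self_left, Finset.univ_inter]
        rw [hI]
        ext x; simp [Finset.mem_erase, eq_comm]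
      exact ⟨j, hIj.le, hIj ▸ hconn⟩
    · -- grow I by one adjacent vertex
      have hne : (Finset.univ \ I).Nonempty := by
        rw [← Finset.card_pos, hcard]; omega
      obtain ⟨b, hb⟩ := hne
      have hbI : b ∉ I := (Finset.mem_sdiff.mp hb).2
      have hIne : (I : Set (Fin (n + 1))).Nonempty := hconn.nonempty.elim fun x => ⟨x.1, x.2⟩
      obtain ⟨a, ha⟩ := hIne
      obtain ⟨u, hu, v, hv, huv⟩ :=
        exists_crossing_edge (s := (I : Set (Fin (n + 1)))) ((hG.preconnected a b).some) ha
          (by simpa using hbI)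
      have hvI : v ∉ I := by simpa using hv
      have hconn' : (G.induce ((insert v I : Finset (Fin (n + 1))) : Set (Fin (n + 1)))).Connected := by
        have : ((insert v I : Finset (Fin (n + 1))) : Set (Fin (n + 1)))
            = (I : Set (Fin (n + 1))) ∪ {v} := by
          ext x; simp [or_comm]
        rw [this]
        refine SimpleGraph.connected_induce_union hconn.preconnected
          (?_ : (G.induce ({v} : Set (Fin (n + 1)))).Connected).preconnected hu rfl huv
        have hne : Nonempty ({v} : Set (Fin (n + 1))) := ⟨⟨v, rfl⟩⟩
        refine ⟨fun x y => ?_⟩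
        have hxy : x = y := Subtype.ext (x.2.trans y.2.symm)
        exact hxy ▸ SimpleGraph.Reachable.refl x
      have hcard' : (Finset.univ \ insert v I).card = k := by
        have : Finset.univ \ insert v I = (Finset.univ \ I).erase v := by
          ext x; simp [Finset.mem_sdiff, Finset.mem_erase, and_comm, not_or]
        rw [this, Finset.card_erase_of_mem (by simp [hvI]), hcard, Nat.add_sub_cancel]
      obtain ⟨j, hsub, hj⟩ := ih (insert v I) hcard' hk hconn'
      exact ⟨j, (Finset.subset_insert v I).trans hsub, hj⟩

/-- Let `G` be a connected simple graph on `[n+1]` and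
`B = B(G)`. For every `I ∈ B` with `I ≠ [n+1]` there is `J ∈ B` with `I ⊆ J`
and `[n+1] \ J` a singleton. -/
theorem exists_coatom_above {n : ℕ} (G : SimpleGraph (Fin (n + 1)))
    (hG : G.Connected) (I : Finset (Fin (n + 1)))
    (hI : I ∈ graphBuildingSet G) (hproper : I ≠ Finset.univ) :
    ∃ J ∈ graphBuildingSet G, I ⊆ J ∧ ∃ j : Fin (n + 1),
      J = Finset.univ.erase j := by
  have hconn : (G.induce (I : Set (Fin (n + 1)))).Connected := by
    simpa [graphBuildingSet] using hI
  have hpos : 0 < (Finset.univ \ I).card := by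
    rw [Finset.card_pos]
    obtain ⟨x, hx1, hx2⟩ := Finset.exists_of_ssubset
      (lt_of_le_of_ne (Finset.subset_univ I) hproper)
    exact ⟨x, Finset.mem_sdiff.mpr ⟨hx1, hx2⟩⟩
  obtain ⟨j, hsub, hj⟩ := grow_to_coatom G hG _ I rfl hpos hconn
  exact ⟨Finset.univ.erase j, by simpa [graphBuildingSet] using hj, hsub, j, rfl⟩
end

section
/- Let G be a connected simple graph on [n+1], n ≥ 1, with k_{n+1}(G) minimal among all k_i(G). Let B = B(G) and a = (|B| − k_{n+1}(G) − 1)/(n − 1) for n ≥ 2 (for n = 1 take a = 1). Then 1 ≤ a ≤ k_{n+1}(G). -/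
open scoped Classical

lemma induce_singleton_connected {m : ℕ} (G : SimpleGraph (Fin m)) (x : Fin m) :
    (G.induce ({x} : Set (Fin m))).Connected := by
  haveI : Nonempty ({x} : Set (Fin m)) := ⟨⟨x, rfl⟩⟩
  constructor
  rintro ⟨a, ha⟩ ⟨b, hb⟩
  simp only [Set.mem_singleton_iff] at ha hb
  subst ha; subst hb
  exact SimpleGraph.Reachable.refl _

lemma crossing_edge {m : ℕ} {G : SimpleGraph (Fin m)} (hG : G.Connected)
    {S : Finset (Fin m)} (hne : S.Nonempty) (hnu : S ≠ Finset.univ) :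
    ∃ x, x ∉ S ∧ ∃ y ∈ S, G.Adj x y := by
  obtain ⟨y₀, hy₀⟩ := hne
  obtain ⟨x₀, hx₀⟩ : ∃ x, x ∉ S := by
    by_contra h
    push_neg at h
    exact hnu (Finset.eq_univ_iff_forall.mpr h)
  obtain ⟨p⟩ := hG.preconnected x₀ y₀
  clear hnu
  induction p with
  | nil => exact absurd hy₀ hx₀
  | @cons a c b h q ih =>
    by_cases hc : c ∈ S
    · exact ⟨a, hx₀, c, hc, h⟩
    · exact ih hy₀ hc

noncomputable def vchain {m : ℕ} (G : SimpleGraph (Fin m)) (v : Fin m) : ℕ → Finset (Fin m)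
  | 0 => {v}
  | j + 1 =>
    if h : ∃ x, x ∉ vchain G v j ∧ ∃ y ∈ vchain G v j, G.Adj x y
    then insert h.choose (vchain G v j) else vchain G v j

lemma vchain_subset_succ {m : ℕ} (G : SimpleGraph (Fin m)) (v : Fin m) (j : ℕ) :
    vchain G v j ⊆ vchain G v (j + 1) := by
  rw [vchain]
  split
  · exact Finset.subset_insert _ _
  · exact subset_rfl

lemma vchain_mem {m : ℕ} (G : SimpleGraph (Fin m)) (v : Fin m) (j : ℕ) :
    v ∈ vchain G v j := by
  induction j with
  | zero => simp [vchain]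
  | succ j ih => exact vchain_subset_succ G v j ih

lemma vchain_nonempty {m : ℕ} (G : SimpleGraph (Fin m)) (v : Fin m) (j : ℕ) :
    (vchain G v j).Nonempty := ⟨v, vchain_mem G v j⟩

lemma vchain_connected {m : ℕ} (G : SimpleGraph (Fin m)) (v : Fin m) (j : ℕ) :
    (G.induce ((vchain G v j : Finset (Fin m)) : Set (Fin m))).Connected := by
  induction j with
  | zero =>
    rw [vchain, Finset.coe_singleton]
    exact induce_singleton_connected G v
  | succ j ih =>
    by_cases h : ∃ x ∉ vchain G v j, ∃ y ∈ vchain G v j, G.Adj x y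
    · rw [vchain, dif_pos h]
      obtain ⟨hx, y, hy, hadj⟩ := h.choose_spec
      rw [Finset.coe_insert, Set.insert_eq]
      exact SimpleGraph.connected_induce_union
        (induce_singleton_connected G h.choose).preconnected ih.preconnected rfl hy hadj
    · rw [vchain, dif_neg h]
      exact ih

lemma vchain_card {m : ℕ} {G : SimpleGraph (Fin m)} (hG : G.Connected) (v : Fin m)
    {j : ℕ} (hj : j < m) : (vchain G v j).card = j + 1 := by
  induction j with
  | zero => simp [vchain]
  | succ j ih =>
    have hjm : j < m := Nat.lt_of_succ_lt hj
    have hc : (vchain G v j).card = j + 1 := ih hjm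
    have hnu : vchain G v j ≠ Finset.univ := by
      intro h
      rw [h, Finset.card_univ, Fintype.card_fin] at hc
      omega
    have hex := crossing_edge hG (vchain_nonempty G v j) hnu
    rw [vchain, dif_pos hex, Finset.card_insert_of_notMem hex.choose_spec.1, hc]

lemma vchain_univ {m : ℕ} {G : SimpleGraph (Fin m)} (hG : G.Connected) (v : Fin m)
    (hm : 1 ≤ m) : vchain G v (m - 1) = Finset.univ := by
  apply Finset.eq_univ_of_card
  rw [vchain_card hG v (by omega), Fintype.card_fin]
  omega

lemma vchain_zero {m : ℕ} (G : SimpleGraph (Fin m)) (v : Fin m) :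
    vchain G v 0 = {v} := rfl

lemma mem_building_iff {m : ℕ} (G : SimpleGraph (Fin m)) (I : Finset (Fin m)) :
    I ∈ graphBuildingSet G ↔ (G.induce (I : Set (Fin m))).Connected := by
  simp [graphBuildingSet]

lemma singleton_mem_building {m : ℕ} (G : SimpleGraph (Fin m)) (x : Fin m) :
    ({x} : Finset (Fin m)) ∈ graphBuildingSet G := by
  rw [mem_building_iff, Finset.coe_singleton]
  exact induce_singleton_connected G x

lemma nonempty_of_mem_building {m : ℕ} {G : SimpleGraph (Fin m)} {I : Finset (Fin m)}
    (hI : I ∈ graphBuildingSet G) : I.Nonempty := by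
  rw [mem_building_iff] at hI
  obtain ⟨⟨x, hx⟩⟩ := hI.nonempty
  exact ⟨x, hx⟩

lemma kOf_pos {m : ℕ} (G : SimpleGraph (Fin m)) (v : Fin m) : 1 ≤ kOf G v := by
  rw [kOf]
  exact Finset.card_pos.mpr ⟨{v}, Finset.mem_filter.mpr ⟨singleton_mem_building G v, Finset.mem_singleton_self v⟩⟩

lemma card_building_ge {m : ℕ} (G : SimpleGraph (Fin m)) (v : Fin m) :
    (m - 1) + kOf G v ≤ (graphBuildingSet G).card := by
  classical
  set T := (Finset.univ.erase v).image (fun i => ({i} : Finset (Fin m))) with hT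
  set Bv := (graphBuildingSet G).filter (fun I => v ∈ I) with hBv
  have hTcard : T.card = m - 1 := by
    rw [hT, Finset.card_image_of_injective _ Finset.singleton_injective,
      Finset.card_erase_of_mem (Finset.mem_univ v), Finset.card_univ, Fintype.card_fin]
  have hdisj : Disjoint T Bv := by
    rw [Finset.disjoint_left]
    rintro I hIT hIBv
    obtain ⟨i, hi, rfl⟩ := Finset.mem_image.mp hIT
    have hvI : v ∈ ({i} : Finset (Fin m)) := (Finset.mem_filter.mp hIBv).2
    rw [Finset.mem_singleton] at hvI
    exact (Finset.mem_erase.mp hi).1 hvI.symm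
  have hsub : T ∪ Bv ⊆ graphBuildingSet G := by
    intro I hI
    rcases Finset.mem_union.mp hI with h | h
    · obtain ⟨i, _, rfl⟩ := Finset.mem_image.mp h
      exact singleton_mem_building G i
    · exact (Finset.mem_filter.mp h).1
  calc (m - 1) + kOf G v = (T ∪ Bv).card := by
        rw [Finset.card_union_of_disjoint hdisj, hTcard]; rfl
    _ ≤ (graphBuildingSet G).card := Finset.card_le_card hsub

lemma card_building_le {n : ℕ} (hn : 1 ≤ n) (G : SimpleGraph (Fin (n + 1)))
    (hG : G.Connected) (v : Fin (n + 1)) :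
    (graphBuildingSet G).card ≤ n * kOf G v + 1 := by
  classical
  set B := graphBuildingSet G with hB
  set Bv := B.filter (fun I => v ∈ I) with hBv
  set D := B.filter (fun I => ¬ v ∈ I) with hD
  have hvn : vchain G v n = Finset.univ := by
    have := vchain_univ hG v (by omega : 1 ≤ n + 1)
    simpa using this
  -- existence of an intersecting level for nonempty I
  have hexI : ∀ I : Finset (Fin (n + 1)), I.Nonempty →
      ∃ j, (I ∩ vchain G v j).Nonempty := by
    intro I hIne
    exact ⟨n, by rwa [hvn, Finset.inter_univ]⟩
  set f : Finset (Fin (n + 1)) → ℕ × Finset (Fin (n + 1)) := fun I =>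
    if h : ∃ j, (I ∩ vchain G v j).Nonempty
    then (Nat.find h, I ∪ vchain G v (Nat.find h)) else (0, I) with hf
  set E : Finset (ℕ × Finset (Fin (n + 1))) :=
    (Finset.Ico 1 n ×ˢ Bv) ∪ {(n, Finset.univ)} with hE
  -- basic facts about jI for I ∈ D
  have key : ∀ I ∈ D, ∀ (h : ∃ j, (I ∩ vchain G v j).Nonempty),
      1 ≤ Nat.find h ∧ Nat.find h ≤ n ∧
      (I ∪ vchain G v (Nat.find h)) \ vchain G v (Nat.find h - 1) = I ∧
      (I ∪ vchain G v (Nat.find h)) ∈ Bv := by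
    intro I hID h
    obtain ⟨hIB, hvI⟩ := Finset.mem_filter.mp hID
    have hspec := Nat.find_spec h
    have hj1 : 1 ≤ Nat.find h := by
      rcases Nat.eq_zero_or_pos (Nat.find h) with h0 | h0
      · exfalso
        rw [h0] at hspec
        obtain ⟨w, hw⟩ := hspec
        rw [vchain_zero, Finset.mem_inter, Finset.mem_singleton] at hw
        exact hvI (hw.2 ▸ hw.1)
      · exact h0
    have hjn : Nat.find h ≤ n := by
      apply Nat.find_le
      rw [hvn, Finset.inter_univ]
      exact nonempty_of_mem_building hIB
    refine ⟨hj1, hjn, ?_, ?_⟩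
    · -- the recovery identity
      set j := Nat.find h with hj
      have hj0 : j - 1 + 1 = j := Nat.succ_pred_eq_of_pos hj1
      have hnotprev : ¬ (I ∩ vchain G v (j - 1)).Nonempty :=
        Nat.find_min h (by omega)
      have hdisjprev : ∀ x ∈ I, x ∉ vchain G v (j - 1) := by
        intro x hx hx'
        exact hnotprev ⟨x, Finset.mem_inter.mpr ⟨hx, hx'⟩⟩
      have hsub : vchain G v (j - 1) ⊆ vchain G v j := by
        conv_rhs => rw [← hj0]
        exact vchain_subset_succ G v (j - 1)
      have hcard1 : (vchain G v j \ vchain G v (j - 1)).card = 1 := by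
        rw [Finset.card_sdiff_of_subset hsub, vchain_card hG v (by omega : j < n + 1),
          vchain_card hG v (by omega : j - 1 < n + 1)]
        omega
      obtain ⟨w, hw⟩ := hspec
      rw [Finset.mem_inter] at hw
      have hwsd : w ∈ vchain G v j \ vchain G v (j - 1) :=
        Finset.mem_sdiff.mpr ⟨hw.2, hdisjprev w hw.1⟩
      have hsdeq : vchain G v j \ vchain G v (j - 1) = {w} := by
        obtain ⟨a, ha⟩ := Finset.card_eq_one.mp hcard1
        rw [ha] at hwsd ⊢
        rw [Finset.mem_singleton] at hwsd
        rw [hwsd]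
      ext x
      simp only [Finset.mem_sdiff, Finset.mem_union]
      constructor
      · rintro ⟨hx1 | hx1, hx2⟩
        · exact hx1
        · have : x ∈ vchain G v j \ vchain G v (j - 1) :=
            Finset.mem_sdiff.mpr ⟨hx1, hx2⟩
          rw [hsdeq, Finset.mem_singleton] at this
          exact this ▸ hw.1
      · intro hx
        exact ⟨Or.inl hx, hdisjprev x hx⟩
    · -- union is in Bv
      apply Finset.mem_filter.mpr
      constructor
      · rw [mem_building_iff, Finset.coe_union]
        apply SimpleGraph.induce_union_connected
        · exact ((mem_building_iff G I).mp hIB).preconnected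
        · exact (vchain_connected G v _).preconnected
        · obtain ⟨w, hw⟩ := hspec
          rw [Finset.mem_inter] at hw
          exact ⟨w, hw.1, hw.2⟩
      · exact Finset.mem_union.mpr (Or.inr (vchain_mem G v _))
  -- counting
  have hDcard : D.card ≤ E.card := by
    apply Finset.card_le_card_of_injOn f
    · intro I hID
      have hIB := (Finset.mem_filter.mp hID).1
      have h : ∃ j, (I ∩ vchain G v j).Nonempty :=
        hexI I (nonempty_of_mem_building hIB)
      obtain ⟨hj1, hjn, hrec, hKBv⟩ := key I hID h
      rw [hf]
      simp only [dif_pos h]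
      rcases Nat.lt_or_ge (Nat.find h) n with hlt | hge
      · apply Finset.mem_union_left
        exact Finset.mem_product.mpr ⟨Finset.mem_Ico.mpr ⟨hj1, hlt⟩, hKBv⟩
      · have hjeq : Nat.find h = n := le_antisymm hjn hge
        apply Finset.mem_union_right
        rw [Finset.mem_singleton, hjeq, hvn]
        simp
    · intro I₁ hI₁ I₂ hI₂ hfeq
      simp only [Finset.mem_coe] at hI₁ hI₂
      have h₁ : ∃ j, (I₁ ∩ vchain G v j).Nonempty :=
        hexI I₁ (nonempty_of_mem_building (Finset.mem_filter.mp hI₁).1)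
      have h₂ : ∃ j, (I₂ ∩ vchain G v j).Nonempty :=
        hexI I₂ (nonempty_of_mem_building (Finset.mem_filter.mp hI₂).1)
      rw [hf] at hfeq
      simp only [dif_pos h₁, dif_pos h₂, Prod.mk.injEq] at hfeq
      obtain ⟨hjeq, hKeq⟩ := hfeq
      rw [hjeq] at hKeq
      obtain ⟨-, -, hrec₁, -⟩ := key I₁ hI₁ h₁
      obtain ⟨-, -, hrec₂, -⟩ := key I₂ hI₂ h₂
      rw [← hrec₁, ← hrec₂, hjeq, hKeq]
  have hEcard : E.card ≤ (n - 1) * kOf G v + 1 := by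
    calc E.card ≤ (Finset.Ico 1 n ×ˢ Bv).card + ({(n, Finset.univ)} :
          Finset (ℕ × Finset (Fin (n + 1)))).card := Finset.card_union_le _ _
      _ = (n - 1) * kOf G v + 1 := by
          rw [Finset.card_product, Nat.card_Ico, Finset.card_singleton]; rfl
  have hsplit : Bv.card + D.card = B.card :=
    Finset.card_filter_add_card_filter_not _
  have hkv : Bv.card = kOf G v := rfl
  have : B.card ≤ kOf G v + ((n - 1) * kOf G v + 1) := by omega
  calc B.card ≤ kOf G v + ((n - 1) * kOf G v + 1) := this
    _ = n * kOf G v + 1 := by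
        obtain ⟨t, rfl⟩ : ∃ t, n = t + 1 := ⟨n - 1, by omega⟩
        simp only [Nat.add_sub_cancel]
        ring

/-- Let `G` be connected on `[n+1]`, `n ≥ 1`, with `k_{n+1}`
minimal. With `a = (|B| − k_{n+1} − 1)/(n − 1)` for `n ≥ 2` (and `a = 1` for
`n = 1`), we have `1 ≤ a ≤ k_{n+1}`. -/
theorem a_between_one_and_k {n : ℕ} (hn : 1 ≤ n)
    (G : SimpleGraph (Fin (n + 1))) (hG : G.Connected)
    (hmin : ∀ i : Fin (n + 1), kOf G (Fin.last n) ≤ kOf G i)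
    (a : ℚ)
    (ha : a = if n = 1 then 1 else
      ((graphBuildingSet G).card - (kOf G (Fin.last n)) - 1 : ℚ) / ((n - 1 : ℕ) : ℚ)) :
    1 ≤ a ∧ a ≤ (kOf G (Fin.last n) : ℚ) := by
  set v := Fin.last n
  set k := kOf G v with hk
  have hk1 : 1 ≤ k := kOf_pos G v
  have hge : n + k ≤ (graphBuildingSet G).card := by
    have := card_building_ge G v
    simpa using this
  have hle : (graphBuildingSet G).card ≤ n * k + 1 := card_building_le hn G hG v
  have hk1q : (1 : ℚ) ≤ (k : ℚ) := by exact_mod_cast hk1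
  by_cases h1 : n = 1
  · rw [ha, if_pos h1]
    exact ⟨le_refl 1, hk1q⟩
  · have hn2 : 2 ≤ n := by omega
    rw [ha, if_neg h1]
    have hd : (0 : ℚ) < ((n - 1 : ℕ) : ℚ) := by
      have : 1 ≤ n - 1 := by omega
      exact_mod_cast Nat.lt_of_lt_of_le Nat.zero_lt_one this
    have hdq : ((n - 1 : ℕ) : ℚ) = (n : ℚ) - 1 := by
      have := Nat.cast_sub (R := ℚ) hn
      simpa using this
    have hgeq : (n : ℚ) + (k : ℚ) ≤ ((graphBuildingSet G).card : ℚ) := by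
      exact_mod_cast hge
    have hleq : ((graphBuildingSet G).card : ℚ) ≤ (n : ℚ) * (k : ℚ) + 1 := by
      exact_mod_cast hle
    constructor
    · rw [le_div_iff₀ hd, one_mul, hdq]
      linarith
    · rw [div_le_iff₀ hd, hdq]
      nlinarith
end
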